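/- If ω is a finite positive Borel measure on [0,1) satisfying ∫₀ᵗ s^{1/(1-t)} dω(s) ≤ C·ω̂(t) for all 0 ≤ t < 1, then r^{1/(1-t)}·ω̂(r) ≤ (C+1)·ω̂(t) for all 0 ≤ r ≤ t < 1. -/

import Mathlib

open MeasureTheory Set

theorem stmt_5 (ω : Measure ℝ) [IsFiniteMeasure ω] (C : ℝ) (hC : 0 < C)
    (h : ∀ t : ℝ, 0 ≤ t → t < 1 →
      (∫ s in Ico (0 : ℝ) t, s ^ (1 / (1 - t)) ∂ω) ≤ C * (ω (Ico t 1)).toReal) :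
    ∀ r t : ℝ, 0 ≤ r → r ≤ t → t < 1 →
      r ^ (1 / (1 - t)) * (ω (Ico r 1)).toReal ≤ (C + 1) * (ω (Ico t 1)).toReal := by
  intro r t hr hrt ht
  set α := 1 / (1 - t) with hαdef
  have hαpos : 0 < α := by
    have : 0 < 1 - t := by linarith
    positivity
  have hr1 : r < 1 := lt_of_le_of_lt hrt ht
  have hrα1 : r ^ α ≤ 1 := Real.rpow_le_one hr hr1.le hαpos.le
  have hrα0 : 0 ≤ r ^ α := Real.rpow_nonneg hr α
  have hint : IntegrableOn (fun s : ℝ => s ^ α) (Ico 0 t) ω := by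
    apply Integrable.mono' (integrable_const (1 : ℝ))
    · exact ((by measurability : Measurable fun s : ℝ => s ^ α)).aestronglyMeasurable
    · refine (ae_restrict_iff' measurableSet_Ico).2 (ae_of_all _ fun s hs => ?_)
      rw [Real.norm_eq_abs, abs_of_nonneg (Real.rpow_nonneg hs.1 _)]
      exact Real.rpow_le_one hs.1 (hs.2.trans ht).le hαpos.le
  have hsub : Ico r t ⊆ Ico 0 t := Ico_subset_Ico_left hr
  have h1 : (ω (Ico r t)).toReal * r ^ α ≤ ∫ s in Ico r t, s ^ α ∂ω := by
    have := setIntegral_const (μ := ω) (s := Ico r t) (r ^ α)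
    rw [smul_eq_mul, measureReal_def] at this
    rw [← this]
    refine setIntegral_mono_on (integrable_const _) (hint.mono_set hsub)
      measurableSet_Ico fun s hs => ?_
    exact Real.rpow_le_rpow hr hs.1 hαpos.le
  have h2 : (∫ s in Ico r t, s ^ α ∂ω) ≤ ∫ s in Ico 0 t, s ^ α ∂ω := by
    refine setIntegral_mono_set hint ?_ (ae_of_all _ hsub)
    refine (ae_restrict_iff' measurableSet_Ico).2 (ae_of_all _ fun s hs => ?_)
    exact Real.rpow_nonneg hs.1 _
  have h3 := h t (hr.trans hrt) ht
  have hsplit : (ω (Ico r 1)).toReal = (ω (Ico r t)).toReal + (ω (Ico t 1)).toReal := by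
    rw [← ENNReal.toReal_add (measure_ne_top _ _) (measure_ne_top _ _),
      ← measure_union (Ico_disjoint_Ico_same) measurableSet_Ico,
      Ico_union_Ico_eq_Ico hrt ht.le]
  have hb0 : 0 ≤ (ω (Ico t 1)).toReal := ENNReal.toReal_nonneg
  have hkey : r ^ α * (ω (Ico r t)).toReal ≤ C * (ω (Ico t 1)).toReal := by
    calc r ^ α * (ω (Ico r t)).toReal = (ω (Ico r t)).toReal * r ^ α := mul_comm _ _
      _ ≤ ∫ s in Ico r t, s ^ α ∂ω := h1
      _ ≤ ∫ s in Ico 0 t, s ^ α ∂ω := h2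
      _ ≤ C * (ω (Ico t 1)).toReal := h3
  have hlast : r ^ α * (ω (Ico t 1)).toReal ≤ (ω (Ico t 1)).toReal := by
    nlinarith
  rw [hsplit]
  nlinarith
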